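/- Let n, k > 1 and k < w < kn, and let α₁ = a₁a₂⋯a_n be the lexicographically smallest necklace in S_k(n,w↑). Let s = p·q be a string in S_k(n,w↑) where q is the longest suffix of s such that q·p is a necklace, and assume s is not of the form k^{n−j} a₁⋯a_j for any 0 ≤ j < n. Let β₂ be the necklace in S_k(n) from the Granddaddy decomposition of s, i.e., the necklace with prefix q that immediately follows (in the lexicographic order of all necklaces in S_k(n)) a necklace with suffix p. Then the smallest necklace δ₂ in S_k(n,w↑) that is lexicographically greater than or equal to β₂ exists, δ₂ is not the largest necklace of S_k(n,w↑) so the necklace δ₃ immediately following δ₂ in the lexicographic order of necklaces in S_k(n,w↑) exists, and q is a prefix of the concatenation ap(δ₂)·ap(δ₃). -/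

import Mathlib

/-- `s` is a string over the alphabet `{1, 2, …, k}`. -/
def IsStr (k : ℕ) (s : List ℕ) : Prop := ∀ x ∈ s, 1 ≤ x ∧ x ≤ k

/-- A necklace is a string that is lexicographically smallest among all of its rotations. -/
def IsNecklace (s : List ℕ) : Prop := ∀ i : ℕ, s ≤ s.rotate i

section Kit
open List

lemma cons_lt_cons_iff' {x y : ℕ} {s t : List ℕ} :
    (x::s) < (y::t) ↔ x < y ∨ (x = y ∧ s < t) := by
  constructor
  · intro h
    cases h with
    | cons h => exact Or.inr ⟨rfl, h⟩
    | rel h => exact Or.inl h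
  · rintro (h | ⟨rfl, h⟩)
    · exact List.Lex.rel h
    · exact List.Lex.cons h

lemma cons_le_cons_iff' {x y : ℕ} {s t : List ℕ} :
    (x::s) ≤ (y::t) ↔ x < y ∨ (x = y ∧ s ≤ t) := by
  rw [le_iff_lt_or_eq, le_iff_lt_or_eq, cons_lt_cons_iff', List.cons.injEq]
  constructor
  · rintro ((h | ⟨rfl, h⟩) | ⟨rfl, rfl⟩)
    · exact Or.inl h
    · exact Or.inr ⟨rfl, Or.inl h⟩
    · exact Or.inr ⟨rfl, Or.inr rfl⟩
  · rintro (h | ⟨rfl, h | rfl⟩)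
    · exact Or.inl (Or.inl h)
    · exact Or.inl (Or.inr ⟨rfl, h⟩)
    · exact Or.inr ⟨rfl, rfl⟩

lemma not_cons_le_nil {x : ℕ} {s : List ℕ} : ¬ (x::s) ≤ ([] : List ℕ) := by
  intro h
  rcases le_iff_lt_or_eq.1 h with h | h
  · exact List.not_lt_nil _ h
  · simp at h

lemma append_lt_append_left' {u s t : List ℕ} : u ++ s < u ++ t ↔ s < t := by
  induction u with
  | nil => simp
  | cons a u ih => simpa [cons_lt_cons_iff'] using ih

lemma append_le_append_left' {u s t : List ℕ} : u ++ s ≤ u ++ t ↔ s ≤ t := by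
  rw [le_iff_lt_or_eq, le_iff_lt_or_eq, append_lt_append_left', List.append_cancel_left_eq]

lemma lt_append_of_lt {A B X Y : List ℕ} (hl : A.length = B.length) (h : A < B) :
    A ++ X < B ++ Y := by
  induction A generalizing B with
  | nil =>
    have : B = [] := by simpa using (List.length_eq_zero_iff.1 hl.symm)
    subst this; exact absurd h (by intro h; exact List.not_lt_nil _ h)
  | cons a A ih =>
    cases B with
    | nil => simp at hl
    | cons b B =>
      rcases cons_lt_cons_iff'.1 h with h' | ⟨rfl, h'⟩
      · exact List.Lex.rel h'
      · exact List.Lex.cons (ih (by simpa using hl) h')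

lemma lt_decomp {A B : List ℕ} (hl : A.length = B.length) (h : A < B) :
    ∃ c x y u v, A = c ++ x :: u ∧ B = c ++ y :: v ∧ x < y := by
  induction A generalizing B with
  | nil =>
    have : B = [] := by simpa using (List.length_eq_zero_iff.1 hl.symm)
    subst this; exact absurd h (by intro h; exact List.not_lt_nil _ h)
  | cons a A ih =>
    cases B with
    | nil => simp at hl
    | cons b B =>
      rcases cons_lt_cons_iff'.1 h with h' | ⟨rfl, h'⟩
      · exact ⟨[], a, b, A, B, rfl, rfl, h'⟩
      · obtain ⟨c, x, y, u, v, h1, h2, hxy⟩ := ih (by simpa using hl) h'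
        exact ⟨a::c, x, y, u, v, by simp [h1], by simp [h2], hxy⟩

lemma prefix_sandwich {x A B C : List ℕ} (hA : x <+: A) (hB : x <+: B)
    (h1 : A ≤ C) (h2 : C ≤ B) : x <+: C := by
  induction x generalizing A B C with
  | nil => exact List.nil_prefix
  | cons g x ih =>
    obtain ⟨A', rfl⟩ := hA
    obtain ⟨B', rfl⟩ := hB
    cases C with
    | nil => exact absurd h1 (by simpa using not_cons_le_nil)
    | cons h C' =>
      rw [List.cons_append] at h1 h2
      rcases cons_le_cons_iff'.1 h1 with hgh | ⟨rfl, hAC⟩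
      · rcases cons_le_cons_iff'.1 h2 with hhg | ⟨heq, _⟩
        · exact absurd (hgh.trans hhg) (lt_irrefl _)
        · omega
      · rcases cons_le_cons_iff'.1 h2 with hhg | ⟨_, hCB⟩
        · exact absurd hhg (lt_irrefl _)
        · exact List.cons_prefix_cons.2 ⟨rfl, ih (List.prefix_append _ _) (List.prefix_append _ _) hAC hCB⟩

lemma le_replicate_of_le {x : List ℕ} {k : ℕ} (hx : ∀ a ∈ x, a ≤ k) :
    x ≤ List.replicate x.length k := by
  induction x with
  | nil => simp
  | cons a x ih =>
    rw [List.length_cons, List.replicate_succ]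
    rcases lt_or_eq_of_le (hx a (List.mem_cons_self)) with h | rfl
    · exact le_of_lt (List.Lex.rel h)
    · exact cons_le_cons_iff'.2 (Or.inr ⟨rfl, ih fun b hb => hx b (List.mem_cons_of_mem _ hb)⟩)

end Kit

section Neck2
open List

lemma isNecklace_replicate (n k : ℕ) : IsNecklace (List.replicate n k) := by
  intro i; rw [List.rotate_replicate]

lemma necklace_all_max {k : ℕ} {s : List ℕ} (hstr : ∀ x ∈ s, x ≤ k)
    (hneck : IsNecklace s) (hhead : ∃ s', s = k :: s') : s = List.replicate s.length k := by
  rw [List.eq_replicate_iff]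
  refine ⟨rfl, fun b hb => ?_⟩
  obtain ⟨l₁, l₂, rfl⟩ := List.append_of_mem hb
  have hrot : (l₁ ++ b :: l₂).rotate l₁.length = b :: (l₂ ++ l₁) := by
    rw [List.rotate_eq_drop_append_take (by simp), List.drop_left, List.take_left]
    simp
  have hle := hneck l₁.length
  rw [hrot] at hle
  obtain ⟨s', hs'⟩ := hhead
  rw [hs'] at hle
  rcases cons_le_cons_iff'.1 hle with h | ⟨rfl, _⟩
  · have : b ≤ k := hstr b hb
    omega
  · rfl

lemma bump {k : ℕ} {v : List ℕ} {a t : ℕ}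
    (hstr : IsStr k (v ++ a :: List.replicate t k))
    (hneck : IsNecklace (v ++ a :: List.replicate t k)) :
    IsNecklace (v ++ List.replicate (t+1) k) := by
  have ha : a ≤ k := (hstr a (by simp)).2
  rcases eq_or_lt_of_le ha with rfl | halt
  · rwa [show v ++ a :: List.replicate t a = v ++ List.replicate (t+1) a by
      rw [List.replicate_succ]] at hneck
  rcases eq_or_ne v [] with rfl | hvne
  · simpa using isNecklace_replicate (t+1) k
  obtain ⟨b, v', hbv⟩ : ∃ b v', v = b :: v' := by
    cases v with
    | nil => exact absurd rfl hvne
    | cons b v' => exact ⟨b, v', rfl⟩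
  have hbk : b ≤ k := (hstr b (by simp [hbv])).2
  have hblt : b < k := by
    rcases eq_or_lt_of_le hbk with hbe | h
    · exfalso
      have hmax := necklace_all_max (fun x hx => (hstr x hx).2) hneck
        ⟨v' ++ a :: List.replicate t k, by rw [hbv, hbe]; simp⟩
      have hmem : a ∈ List.replicate (v ++ a :: List.replicate t k).length k := by
        rw [← hmax]; simp
      have := List.eq_of_mem_replicate hmem
      omega
    · exact h
  intro i
  rw [← List.rotate_mod]
  have hposlen : 0 < (v ++ List.replicate (t+1) k).length := by simp
  rcases Nat.eq_zero_or_pos (i % (v ++ List.replicate (t+1) k).length) with hz | hpos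
  · rw [hz, List.rotate_zero]
  have hjlt : i % (v ++ List.replicate (t+1) k).length < v.length + (t+1) := by
    have := Nat.mod_lt i hposlen
    simpa using this
  set j := i % (v ++ List.replicate (t+1) k).length with hj
  rcases le_or_gt v.length j with hcase | hcase
  · -- rotation starts in the k-block
    have hdrop : (v ++ List.replicate (t+1) k).drop j = List.replicate (v.length + (t+1) - j) k := by
      rw [List.drop_append, List.drop_eq_nil_of_le hcase, List.drop_replicate,
        List.nil_append]
      congr 1
      omega
    have hrot : (v ++ List.replicate (t+1) k).rotate j
        = List.replicate (v.length + (t+1) - j) k ++ (v ++ List.replicate (t+1) k).take j := by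
      rw [List.rotate_eq_drop_append_take (by simp; omega), hdrop]
    rw [hrot]
    conv_rhs => rw [show v.length + (t+1) - j = (v.length + (t+1) - j - 1) + 1 by omega,
      List.replicate_succ, List.cons_append]
    conv_lhs => rw [hbv, List.cons_append]
    exact le_of_lt (List.Lex.rel hblt)
  · -- rotation starts inside v
    obtain ⟨v₁, v₂, hv12, hlv₁, hlv₂⟩ :
        ∃ v₁ v₂, v = v₁ ++ v₂ ∧ v₁.length = j ∧ v₂.length = v.length - j :=
      ⟨v.take j, v.drop j, (List.take_append_drop j v).symm,
        by rw [List.length_take]; exact min_eq_left hcase.le, by rw [List.length_drop]⟩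
    obtain ⟨u, d, hud, hlu, hld⟩ :
        ∃ u d, v = u ++ d ∧ u.length = v.length - j ∧ d.length = j :=
      ⟨v.take (v.length - j), v.drop (v.length - j), (List.take_append_drop _ v).symm,
        by rw [List.length_take]; exact min_eq_left (by omega), by rw [List.length_drop]; omega⟩
    have hrot' : (v ++ List.replicate (t+1) k).rotate j = (v₂ ++ List.replicate (t+1) k) ++ v₁ := by
      rw [List.rotate_eq_drop_append_take (by simp; omega)]
      conv_lhs => rw [hv12]
      rw [List.append_assoc, List.drop_left' hlv₁,
        List.take_left' (l₂ := v₂ ++ List.replicate (t+1) k) hlv₁]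
    have hrotw : (v ++ a :: List.replicate t k).rotate j = (v₂ ++ a :: List.replicate t k) ++ v₁ := by
      rw [List.rotate_eq_drop_append_take (by simp; omega)]
      conv_lhs => rw [hv12]
      rw [List.append_assoc, List.drop_left' hlv₁,
        List.take_left' (l₂ := v₂ ++ a :: List.replicate t k) hlv₁]
    rw [hrot']
    rcases lt_trichotomy u v₂ with hlt | heq | hgt
    · conv_lhs => rw [hud, List.append_assoc]
      conv_rhs => rw [List.append_assoc]
      exact le_of_lt (lt_append_of_lt (by omega) hlt)
    · obtain ⟨d₀, d', rfl⟩ : ∃ d₀ d', d = d₀ :: d' := by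
        cases d with
        | nil => exfalso; simp at hld; omega
        | cons x xs => exact ⟨x, xs, rfl⟩
      have hd₀ : d₀ ≤ k := (hstr d₀ (by rw [hud]; simp)).2
      rcases eq_or_lt_of_le hd₀ with hd₀e | hd₀lt
      · exfalso
        have hle := hneck j
        rw [hrotw] at hle
        have h1 : (v₂ ++ a :: List.replicate t k) ++ v₁
            = u ++ (a :: (List.replicate t k ++ v₁)) := by
          rw [← heq]; simp
        have h2 : v ++ a :: List.replicate t k
            = u ++ (d₀ :: (d' ++ a :: List.replicate t k)) := by
          rw [hud]; simp
        rw [h1, h2] at hle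
        have hbad : u ++ a :: (List.replicate t k ++ v₁)
            < u ++ d₀ :: (d' ++ a :: List.replicate t k) :=
          append_lt_append_left'.2 (List.Lex.rel (by omega))
        exact absurd hle (not_le.2 hbad)
      · have hg1 : v ++ List.replicate (t+1) k
            = u ++ (d₀ :: (d' ++ List.replicate (t+1) k)) := by
          rw [hud]; simp
        have hg2 : (v₂ ++ List.replicate (t+1) k) ++ v₁
            = u ++ (k :: (List.replicate t k ++ v₁)) := by
          rw [← heq, List.replicate_succ]; simp
        rw [hg1, hg2]
        exact le_of_lt (append_lt_append_left'.2 (List.Lex.rel hd₀lt))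
    · exfalso
      have hle := hneck j
      rw [hrotw] at hle
      have h2 : v ++ a :: List.replicate t k = u ++ (d ++ a :: List.replicate t k) := by
        rw [hud, List.append_assoc]
      rw [h2, List.append_assoc] at hle
      have hbad : v₂ ++ (a :: List.replicate t k ++ v₁) < u ++ (d ++ a :: List.replicate t k) :=
        lt_append_of_lt (by omega) hgt
      exact absurd hle (not_le.2 hbad)

lemma padSuffix {k : ℕ} (hk : 1 ≤ k) {β : List ℕ} (hstr : IsStr k β) (hneck : IsNecklace β) :
    ∀ m, m ≤ β.length → IsNecklace (β.take (β.length - m) ++ List.replicate m k) := by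
  intro m
  induction m with
  | zero => intro _; simpa using hneck
  | succ m ih =>
    intro hm
    have ihm := ih (by omega)
    have hidx : β.length - m - 1 < β.length := by omega
    have htake := List.take_concat_get hidx
    rw [List.concat_eq_append] at htake
    rw [show β.length - m - 1 + 1 = β.length - m by omega] at htake
    rw [← htake, List.append_assoc, List.singleton_append] at ihm
    have hstr2 : IsStr k (β.take (β.length - m - 1)
        ++ β[β.length - m - 1] :: List.replicate m k) := by
      intro x hx
      rcases List.mem_append.1 hx with h | h
      · exact hstr x (List.mem_of_mem_take h)
      · rcases List.mem_cons.1 h with rfl | h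
        · exact hstr _ (List.getElem_mem hidx)
        · rw [List.eq_of_mem_replicate h]
          exact ⟨hk, le_refl k⟩
    have hres := bump hstr2 ihm
    rw [show β.length - (m+1) = β.length - m - 1 by omega]
    exact hres

lemma pad_necklace {k : ℕ} (hk : 1 ≤ k) {β x : List ℕ} (hstr : IsStr k β) (hneck : IsNecklace β)
    (hx : x <+: β) : IsNecklace (x ++ List.replicate (β.length - x.length) k) := by
  have hL : x.length ≤ β.length := hx.length_le
  have hps := padSuffix hk hstr hneck (β.length - x.length) (by omega)
  have htk : β.take (β.length - (β.length - x.length)) = x := by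
    rw [show β.length - (β.length - x.length) = x.length by omega]
    exact (List.prefix_iff_eq_take.1 hx).symm
  rwa [htk] at hps

lemma pad_isStr {k : ℕ} (hk : 1 ≤ k) {x : List ℕ} (h : IsStr k x) (m : ℕ) :
    IsStr k (x ++ List.replicate m k) := by
  intro a ha
  rcases List.mem_append.1 ha with h' | h'
  · exact h a h'
  · rw [List.eq_of_mem_replicate h']
    exact ⟨hk, le_refl k⟩

lemma pad_sum_ge {k : ℕ} {A x : List ℕ} (hstr : ∀ a ∈ A, a ≤ k) (hx : x <+: A) :
    A.sum ≤ (x ++ List.replicate (A.length - x.length) k).sum := by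
  obtain ⟨r, rfl⟩ := hx
  rw [List.sum_append, List.sum_append, List.sum_replicate, smul_eq_mul]
  have h1 : r.sum ≤ r.length * k := by
    have := List.sum_le_card_nsmul r k (fun x hx => hstr x (by simp [hx]))
    simpa using this
  have h2 : (x ++ r).length - x.length = r.length := by simp
  rw [h2]
  omega

lemma le_pad {k : ℕ} {A x : List ℕ} (hstr : ∀ a ∈ A, a ≤ k) (hx : x <+: A) :
    A ≤ x ++ List.replicate (A.length - x.length) k := by
  obtain ⟨r, rfl⟩ := hx
  have h2 : (x ++ r).length - x.length = r.length := by simp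
  rw [h2]
  exact append_le_append_left'.2 (le_replicate_of_le (fun a ha => hstr a (by simp [ha])))

lemma le_replicate_len {k n : ℕ} {x : List ℕ} (hstr : ∀ a ∈ x, a ≤ k) (hlen : x.length = n) :
    x ≤ List.replicate n k := by
  subst hlen
  exact le_replicate_of_le hstr

end Neck2

/-- `β` is a necklace in `S_k(n)`. -/
def IsNeckIn (k n : ℕ) (β : List ℕ) : Prop :=
  IsStr k β ∧ β.length = n ∧ IsNecklace β

/-- `β` is a necklace in `S_k(n, w↑)` (weight at least `w`). -/
def IsNeckInW (k n w : ℕ) (β : List ℕ) : Prop :=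
  IsStr k β ∧ β.length = n ∧ w ≤ β.sum ∧ IsNecklace β

/-- `γ` immediately follows `β` in the lexicographically ordered list `N_k(n)` of all
necklaces in `S_k(n)`, considered cyclically. -/
def CyclicSucc (k n : ℕ) (β γ : List ℕ) : Prop :=
  IsNeckIn k n β ∧ IsNeckIn k n γ ∧
  ((β < γ ∧ ∀ δ : List ℕ, IsNeckIn k n δ → ¬(β < δ ∧ δ < γ)) ∨
   (γ < β ∧ (∀ δ : List ℕ, IsNeckIn k n δ → δ ≤ β) ∧
     (∀ δ : List ℕ, IsNeckIn k n δ → γ ≤ δ)) ∨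
   (β = γ ∧ ∀ δ : List ℕ, IsNeckIn k n δ → δ = β))

/-- `listPow t j` is `j` copies of `t` concatenated. -/
def listPow (t : List ℕ) : ℕ → List ℕ
  | 0 => []
  | j + 1 => t ++ listPow t j

/-- `t` is the aperiodic prefix of `s`: the shortest string some power of which is `s`. -/
def IsApOf (t s : List ℕ) : Prop :=
  (∃ j, 1 ≤ j ∧ s = listPow t j) ∧
  ∀ u m, 1 ≤ m → s = listPow u m → t.length ≤ u.length

section Fin
open List

lemma finite_strings (k : ℕ) : ∀ n : ℕ, {l : List ℕ | l.length = n ∧ ∀ x ∈ l, x ≤ k}.Finite := by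
  intro n
  induction n with
  | zero =>
    apply Set.Finite.subset (Set.finite_singleton ([] : List ℕ))
    rintro l ⟨hl, -⟩
    simp [List.length_eq_zero_iff.1 hl]
  | succ n ih =>
    apply Set.Finite.subset (Set.Finite.image2 (fun (x : ℕ) (l : List ℕ) => x :: l)
      (Set.finite_Iic k) ih)
    rintro l ⟨hlen, hmem⟩
    cases l with
    | nil => simp at hlen
    | cons x l' =>
      exact Set.mem_image2_of_mem (by simpa using hmem x (by simp))
        ⟨by simpa using hlen, fun y hy => hmem y (by simp [hy])⟩

lemma exists_min_str {k n : ℕ} {S : Set (List ℕ)} (hS : S.Nonempty)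
    (hsub : ∀ l ∈ S, l.length = n ∧ ∀ x ∈ l, x ≤ k) : ∃ a ∈ S, ∀ b ∈ S, a ≤ b := by
  obtain ⟨a, ha, hmin⟩ := Set.exists_min_image S id
    (Set.Finite.subset (finite_strings k n) hsub) hS
  exact ⟨a, ha, hmin⟩

end Fin

section Pow
open List

lemma listPow_nil : ∀ e : ℕ, listPow ([] : List ℕ) e = [] := by
  intro e
  induction e with
  | zero => rfl
  | succ e ih => simpa [listPow]

lemma listPow_length (t : List ℕ) : ∀ j, (listPow t j).length = j * t.length := by
  intro j
  induction j with
  | zero => simp [listPow]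
  | succ j ih => rw [listPow, List.length_append, ih]; ring

lemma listPow_succ' (t : List ℕ) : ∀ j, listPow t (j+1) = listPow t j ++ t := by
  intro j
  induction j with
  | zero => simp [listPow]
  | succ j ih =>
    show t ++ listPow t (j+1) = listPow t (j+1) ++ t
    rw [ih, ← List.append_assoc, show t ++ listPow t j = listPow t j ++ t from ih]

lemma listPow_replicate (c P : ℕ) : ∀ j, listPow (List.replicate P c) j = List.replicate (j*P) c := by
  intro j
  induction j with
  | zero => simp [listPow]
  | succ j ih => rw [listPow, ih, ← List.replicate_add, show P + j*P = (j+1)*P by ring]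

lemma bad_case {δ₂ δ₃ x τ : List ℕ} {e : ℕ} (hneckδ₂ : IsNecklace δ₂)
    (hlen : δ₂.length = δ₃.length) (hlt : δ₂ < δ₃) (hx₂ : x <+: δ₂) (hx₃ : x <+: δ₃)
    (hpow : δ₃ = listPow τ (e+1)) (hτ : τ.length < x.length) : False := by
  have hτpre : τ <+: δ₃ := by rw [hpow]; exact List.prefix_append τ _
  obtain ⟨c, A, B, u₂, u₃, hA, hB, hAB⟩ := lt_decomp hlen hlt
  have hcδ₂ : c <+: δ₂ := ⟨A :: u₂, hA.symm⟩
  have hcδ₃ : c <+: δ₃ := ⟨B :: u₃, hB.symm⟩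
  have hxc : x <+: c := by
    rcases le_or_gt x.length c.length with h | h
    · exact List.prefix_of_prefix_length_le hx₂ hcδ₂ h
    · exfalso
      have hcA : c ++ [A] <+: x := by
        apply List.prefix_of_prefix_length_le _ hx₂ (by simp; omega)
        exact ⟨u₂, by rw [hA]; simp⟩
      have hcB : c ++ [B] <+: x := by
        apply List.prefix_of_prefix_length_le _ hx₃ (by simp; omega)
        exact ⟨u₃, by rw [hB]; simp⟩
      have : c ++ [A] = c ++ [B] := by
        have h1 := List.prefix_of_prefix_length_le hcA hcB (by simp)
        exact h1.eq_of_length (by simp)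
      have : A = B := by simpa using this
      omega
  have hτne : τ ≠ [] := by
    intro h
    rw [h] at hτ
    have hδ₃nil : δ₃ = [] := by rw [hpow, h, listPow_nil]
    have hxnil : x <+: [] := hδ₃nil ▸ hx₃
    rw [List.prefix_nil.1 hxnil] at hτ
    simp at hτ
  have hτc : τ <+: c := List.prefix_of_prefix_length_le hτpre hcδ₃
    (le_trans (by omega) hxc.length_le)
  obtain ⟨c', rfl⟩ := hτc
  have hlpe : listPow τ e = c' ++ B :: u₃ := by
    have h1 : τ ++ listPow τ e = τ ++ (c' ++ B :: u₃) := by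
      rw [← List.append_assoc, ← hB]
      exact hpow.symm
    exact List.append_cancel_left h1
  have hc'B : c' ++ [B] <+: δ₃ := by
    have h1 : c' ++ [B] <+: listPow τ e := ⟨u₃, by rw [hlpe]; simp⟩
    have h2 : listPow τ e <+: δ₃ := by
      rw [hpow, listPow_succ']
      exact List.prefix_append _ _
    exact h1.trans h2
  have hc'Bc : c' ++ [B] <+: τ ++ c' := by
    apply List.prefix_of_prefix_length_le hc'B hcδ₃
    have : 1 ≤ τ.length := by
      cases τ with
      | nil => exact absurd rfl hτne
      | cons _ _ => simp
    simp
    omega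
  obtain ⟨c₂, hc⟩ := hc'Bc
  -- rotation of δ₂ by |τ|
  have hrot : δ₂.rotate τ.length = (c' ++ A :: u₂) ++ τ := by
    have hδ₂' : δ₂ = τ ++ (c' ++ A :: u₂) := by rw [hA, List.append_assoc]
    rw [hδ₂', List.rotate_eq_drop_append_take (by simp), List.drop_left, List.take_left]
  have hle := hneckδ₂ τ.length
  rw [hrot] at hle
  have hδ₂eq : δ₂ = c' ++ B :: (c₂ ++ A :: u₂) := by
    rw [hA, ← hc]
    simp
  have hρeq : (c' ++ A :: u₂) ++ τ = c' ++ A :: (u₂ ++ τ) := by simp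
  rw [hδ₂eq, hρeq] at hle
  have hbad : c' ++ A :: (u₂ ++ τ) < c' ++ B :: (c₂ ++ A :: u₂) :=
    append_lt_append_left'.2 (List.Lex.rel hAB)
  exact absurd hle (not_le.2 hbad)

end Pow

/-- Lemma 7 (`δ₂` and `δ₃` exist and `ap(δ₂)·ap(δ₃)` has prefix `q`).
Here `β₂` is the necklace from the Granddaddy decomposition of `s`: the necklace with
prefix `q` that immediately follows (cyclically, in `N_k(n)`) a necklace `β₁` with
suffix `p`. -/
theorem prefix_of_ap_delta2_delta3
    (n k w : ℕ) (hn : 1 < n) (hk : 1 < k) (hw1 : k < w) (hw2 : w < k * n)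
    (α₁ : List ℕ) (hα₁ : IsNeckInW k n w α₁)
    (hα₁min : ∀ β : List ℕ, IsNeckInW k n w β → α₁ ≤ β)
    (s p q : List ℕ) (hstr : IsStr k s) (hlen : s.length = n) (hwt : w ≤ s.sum)
    (hpq : s = p ++ q) (hneck : IsNecklace (q ++ p))
    (hlongest : ∀ p' q' : List ℕ, s = p' ++ q' → IsNecklace (q' ++ p') →
      q'.length ≤ q.length)
    (hnotwrap : ∀ j : ℕ, j < n → s ≠ List.replicate (n - j) k ++ α₁.take j)
    (β₁ β₂ : List ℕ) (hconsec : CyclicSucc k n β₁ β₂)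
    (hp : p <:+ β₁) (hq : q <+: β₂) :
    -- the smallest necklace `δ₂` of `S_k(n,w↑)` with `β₂ ≤ δ₂` exists …
    (∃ δ₂ : List ℕ, IsNeckInW k n w δ₂ ∧ β₂ ≤ δ₂ ∧
      ∀ δ : List ℕ, IsNeckInW k n w δ → β₂ ≤ δ → δ₂ ≤ δ) ∧
    (∀ δ₂ : List ℕ,
      (IsNeckInW k n w δ₂ ∧ β₂ ≤ δ₂ ∧
        ∀ δ : List ℕ, IsNeckInW k n w δ → β₂ ≤ δ → δ₂ ≤ δ) →
      -- … `δ₂` is not the largest, so its successor `δ₃` in `S_k(n,w↑)` exists …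
      (∃ δ₃ : List ℕ, IsNeckInW k n w δ₃ ∧ δ₂ < δ₃ ∧
        ∀ δ : List ℕ, IsNeckInW k n w δ → ¬(δ₂ < δ ∧ δ < δ₃)) ∧
      -- … and `q` is a prefix of `ap(δ₂)·ap(δ₃)`.
      (∀ δ₃ : List ℕ,
        (IsNeckInW k n w δ₃ ∧ δ₂ < δ₃ ∧
          ∀ δ : List ℕ, IsNeckInW k n w δ → ¬(δ₂ < δ ∧ δ < δ₃)) →
        ∀ t₂ t₃ : List ℕ, IsApOf t₂ δ₂ → IsApOf t₃ δ₃ → q <+: (t₂ ++ t₃))) := by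
  have hk1 : 1 ≤ k := le_of_lt hk
  have npos : 0 < n := by omega
  obtain ⟨hB1, ⟨hstr₂, hlen₂, hneck₂⟩, -⟩ := hconsec
  have hqstr : IsStr k q := fun x hx => hstr x (by rw [hpq]; exact List.mem_append_right p hx)
  have hpstr : ∀ x ∈ p, x ≤ k := fun x hx => (hstr x (by rw [hpq]; exact List.mem_append_left q hx)).2
  have hLn : q.length ≤ n := hlen₂ ▸ hq.length_le
  have hplen : p.length + q.length = n := by
    have h := hlen; rw [hpq, List.length_append] at h; omega
  -- the padded string γ
  have hγ' : q ++ List.replicate (n - q.length) k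
      = q ++ List.replicate (β₂.length - q.length) k := by rw [hlen₂]
  have hγneck : IsNecklace (q ++ List.replicate (n - q.length) k) := by
    rw [hγ']; exact pad_necklace hk1 hstr₂ hneck₂ hq
  have hγstr : IsStr k (q ++ List.replicate (n - q.length) k) := pad_isStr hk1 hqstr _
  have hγlen : (q ++ List.replicate (n - q.length) k).length = n := by simp; omega
  have hγsum : w ≤ (q ++ List.replicate (n - q.length) k).sum := by
    calc w ≤ s.sum := hwt
      _ ≤ (q ++ List.replicate (n - q.length) k).sum := by
        rw [hpq, List.sum_append, List.sum_append, List.sum_replicate, smul_eq_mul]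
        have h1 : p.sum ≤ p.length * k := by simpa using List.sum_le_card_nsmul p k hpstr
        have h2 : n - q.length = p.length := by omega
        rw [h2]
        omega
  have hγNW : IsNeckInW k n w (q ++ List.replicate (n - q.length) k) :=
    ⟨hγstr, hγlen, hγsum, hγneck⟩
  have hβ₂γ : β₂ ≤ q ++ List.replicate (n - q.length) k := by
    rw [hγ', ← hlen₂] at *
    exact le_pad (fun x hx => (hstr₂ x hx).2) hq
  have hrepNW : IsNeckInW k n w (List.replicate n k) := by
    refine ⟨fun x hx => ?_, by simp, ?_, isNecklace_replicate n k⟩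
    · rw [List.eq_of_mem_replicate hx]; exact ⟨hk1, le_refl k⟩
    · rw [List.sum_replicate, smul_eq_mul]
      calc w ≤ k * n := le_of_lt hw2
        _ = n * k := mul_comm k n
  have hβ₂rep : β₂ ≤ List.replicate n k := le_replicate_len (fun x hx => (hstr₂ x hx).2) hlen₂
  -- PART 1
  obtain ⟨δ₂0, hδ₂0mem, hδ₂0min⟩ := exists_min_str (k := k) (n := n)
    (S := {δ | IsNeckInW k n w δ ∧ β₂ ≤ δ}) ⟨List.replicate n k, hrepNW, hβ₂rep⟩
    (fun l hl => ⟨hl.1.2.1, fun x hx => (hl.1.1 x hx).2⟩)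
  refine ⟨⟨δ₂0, hδ₂0mem.1, hδ₂0mem.2, fun δ h1 h2 => hδ₂0min δ ⟨h1, h2⟩⟩, ?_⟩
  rintro δ₂ ⟨hδ₂NW, hβδ₂, hδ₂min⟩
  obtain ⟨hδ₂str, hδ₂len, hδ₂sum, hδ₂neck⟩ := hδ₂NW
  have hδ₂γ : δ₂ ≤ q ++ List.replicate (n - q.length) k := hδ₂min _ hγNW hβ₂γ
  have hqδ₂ : q <+: δ₂ := prefix_sandwich hq (List.prefix_append q _) hβδ₂ hδ₂γ
  -- q is nonempty
  have hqne : q ≠ [] := by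
    obtain ⟨i₀, hi₀mem, hi₀min⟩ := Finset.exists_min_image (Finset.range n)
      (fun i => s.rotate i) ⟨0, Finset.mem_range.2 npos⟩
    have hi₀ : i₀ < n := Finset.mem_range.1 hi₀mem
    have hi₀len : i₀ ≤ s.length := by rw [hlen]; omega
    have hnk : IsNecklace (s.drop i₀ ++ s.take i₀) := by
      rw [← List.rotate_eq_drop_append_take hi₀len]
      intro j
      rw [List.rotate_rotate]
      calc s.rotate i₀ ≤ s.rotate ((i₀ + j) % n) :=
            hi₀min _ (Finset.mem_range.2 (Nat.mod_lt _ npos))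
        _ = s.rotate (i₀ + j) := by rw [← hlen, List.rotate_mod]
    have hlq := hlongest (s.take i₀) (s.drop i₀) (List.take_append_drop i₀ s).symm hnk
    intro h
    rw [h] at hlq
    rw [List.length_drop] at hlq
    simp at hlq
    omega
  -- δ₂ is not the all-k string
  have hδ₂ne : δ₂ ≠ List.replicate n k := by
    intro hrep
    have hγrep : q ++ List.replicate (n - q.length) k = List.replicate n k :=
      le_antisymm (le_replicate_len (fun x hx => (hγstr x hx).2) hγlen) (hrep ▸ hδ₂γ)
    have hqrep : q = List.replicate q.length k := by
      have h1 : q <+: List.replicate n k := hγrep ▸ List.prefix_append q _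
      have h2 := List.prefix_iff_eq_take.1 h1
      rw [List.take_replicate, min_eq_left hLn] at h2
      exact h2
    have hqpstr : ∀ x ∈ q ++ p, x ≤ k := fun x hx => by
      rcases List.mem_append.1 hx with h | h
      exacts [(hqstr x h).2, hpstr x h]
    have hqphead : ∃ s', q ++ p = k :: s' := by
      obtain ⟨q0, q', hq0⟩ : ∃ q0 q', q = q0 :: q' := by
        cases q with
        | nil => exact absurd rfl hqne
        | cons a b => exact ⟨a, b, rfl⟩
      have hq0k : q0 = k := by
        rw [hq0] at hqrep
        rw [List.length_cons, List.replicate_succ] at hqrep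
        exact (List.cons.injEq _ _ _ _ ▸ hqrep).1
      exact ⟨q' ++ p, by rw [hq0, hq0k, List.cons_append]⟩
    have hqp := necklace_all_max hqpstr hneck hqphead
    have hlqp : (q ++ p).length = n := by rw [List.length_append]; omega
    rw [hlqp] at hqp
    have hps : p = List.replicate p.length k := by
      have h1 : p = (q ++ p).drop q.length := List.drop_left.symm
      rw [hqp, List.drop_replicate, show n - q.length = p.length by omega] at h1
      exact h1
    have hsrep : s = List.replicate n k := by
      rw [hpq, hps, hqrep, ← List.replicate_add, hplen]
    exact hnotwrap 0 npos (by simpa using hsrep)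
  -- PART 2
  obtain ⟨δ₃0, hδ₃0mem, hδ₃0min⟩ := exists_min_str (k := k) (n := n)
    (S := {δ | IsNeckInW k n w δ ∧ δ₂ < δ}) ⟨List.replicate n k, hrepNW,
      lt_of_le_of_ne (le_replicate_len (fun x hx => (hδ₂str x hx).2) hδ₂len) hδ₂ne⟩
    (fun l hl => ⟨hl.1.2.1, fun x hx => (hl.1.1 x hx).2⟩)
  refine ⟨⟨δ₃0, hδ₃0mem.1, hδ₃0mem.2, ?_⟩, ?_⟩
  · rintro δ hNW ⟨h1, h2⟩
    exact absurd (hδ₃0min δ ⟨hNW, h1⟩) (not_le.2 h2)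
  -- PART 3
  rintro δ₃ ⟨hδ₃NW, hlt23, hsucc⟩ t₂ t₃ ⟨⟨j₂, hj₂1, hpow₂⟩, hmin₂⟩ ⟨⟨j₃, hj₃1, hpow₃⟩, hmin₃⟩
  obtain ⟨hδ₃str, hδ₃len, hδ₃sum, hδ₃neck⟩ := hδ₃NW
  obtain ⟨j₂', rfl⟩ : ∃ j', j₂ = j' + 1 := ⟨j₂ - 1, by omega⟩
  obtain ⟨j₃', rfl⟩ : ∃ j', j₃ = j' + 1 := ⟨j₃ - 1, by omega⟩
  have ht₂pre : t₂ <+: δ₂ := by rw [hpow₂]; exact List.prefix_append _ _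
  have hnlen₂ : n = j₂' * t₂.length + t₂.length := by
    rw [← hδ₂len, hpow₂, listPow_length]; ring
  rcases le_or_gt q.length t₂.length with hcase | hcase
  · exact (List.prefix_of_prefix_length_le hqδ₂ ht₂pre hcase).trans (List.prefix_append _ _)
  · have ht₂q : t₂ <+: q := List.prefix_of_prefix_length_le ht₂pre hqδ₂ (le_of_lt hcase)
    obtain ⟨q₂, rfl⟩ := ht₂q
    have hq₂W : q₂ <+: listPow t₂ j₂' := by
      have h1 := hqδ₂
      rw [hpow₂] at h1
      exact (List.prefix_append_right_inj t₂).1 h1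
    have hWδ₂ : listPow t₂ j₂' <+: δ₂ := by
      rw [hpow₂, listPow_succ']
      exact List.prefix_append _ _
    have hq₂δ₂ : q₂ <+: δ₂ := hq₂W.trans hWδ₂
    have hq₂len : q₂.length + t₂.length ≤ n := by
      have h1 := hq₂W.length_le
      rw [listPow_length] at h1
      omega
    have hγ'2 : q₂ ++ List.replicate (n - q₂.length) k
        = q₂ ++ List.replicate (δ₂.length - q₂.length) k := by rw [hδ₂len]
    have hγ'neck : IsNecklace (q₂ ++ List.replicate (n - q₂.length) k) := by
      rw [hγ'2]; exact pad_necklace hk1 hδ₂str hδ₂neck hq₂δ₂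
    have hq₂str : IsStr k q₂ := fun x hx => hδ₂str x (hq₂δ₂.subset hx)
    have hγ'str : IsStr k (q₂ ++ List.replicate (n - q₂.length) k) := pad_isStr hk1 hq₂str _
    have hγ'len : (q₂ ++ List.replicate (n - q₂.length) k).length = n := by
      rw [List.length_append, List.length_replicate]
      omega
    have hγ'sum : w ≤ (q₂ ++ List.replicate (n - q₂.length) k).sum := by
      rw [hγ'2]
      exact le_trans hδ₂sum (pad_sum_ge (fun x hx => (hδ₂str x hx).2) hq₂δ₂)
    have hγ'NW : IsNeckInW k n w (q₂ ++ List.replicate (n - q₂.length) k) :=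
      ⟨hγ'str, hγ'len, hγ'sum, hγ'neck⟩
    have hδ₂γ'le : δ₂ ≤ q₂ ++ List.replicate (n - q₂.length) k := by
      rw [hγ'2]
      exact le_pad (fun x hx => (hδ₂str x hx).2) hq₂δ₂
    have hδ₂γ'ne : δ₂ ≠ q₂ ++ List.replicate (n - q₂.length) k := by
      intro heq
      have ht₂rep : t₂ = List.replicate t₂.length k := by
        have h1 : δ₂ = listPow t₂ j₂' ++ t₂ := by rw [hpow₂, listPow_succ']
        have h2 : δ₂.drop (n - t₂.length) = t₂ := by
          rw [h1]
          apply List.drop_left'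
          rw [listPow_length]
          omega
        rw [heq, List.drop_append, List.drop_eq_nil_of_le (by omega),
          List.drop_replicate, List.nil_append] at h2
        rw [← h2, List.length_replicate]
      have hδ₂rep : δ₂ = List.replicate n k := by
        rw [hpow₂]
        conv_lhs => rw [ht₂rep]
        rw [listPow_replicate, show (j₂' + 1) * t₂.length = n by rw [hnlen₂]; ring]
      have hδ₃le : δ₃ ≤ δ₂ :=
        hδ₂rep ▸ le_replicate_len (fun x hx => (hδ₃str x hx).2) hδ₃len
      exact absurd (lt_of_lt_of_le hlt23 hδ₃le) (lt_irrefl δ₂)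
    have hδ₃γ' : δ₃ ≤ q₂ ++ List.replicate (n - q₂.length) k := by
      by_contra hcon
      exact hsucc _ hγ'NW ⟨lt_of_le_of_ne hδ₂γ'le hδ₂γ'ne, not_le.1 hcon⟩
    have hq₂δ₃ : q₂ <+: δ₃ :=
      prefix_sandwich hq₂δ₂ (List.prefix_append q₂ _) (le_of_lt hlt23) hδ₃γ'
    have ht₃pre : t₃ <+: δ₃ := by rw [hpow₃]; exact List.prefix_append _ _
    rcases le_or_gt q₂.length t₃.length with hc2 | hc2
    · have hq₂t₃ : q₂ <+: t₃ := List.prefix_of_prefix_length_le hq₂δ₃ ht₃pre hc2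
      exact (List.prefix_append_right_inj t₂).2 hq₂t₃
    · exact absurd (bad_case hδ₂neck (by rw [hδ₂len, hδ₃len]) hlt23 hq₂δ₂ hq₂δ₃ hpow₃ hc2) id
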